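/- Let μ be the probability measure on ℝ whose cumulative distribution function is F(t) = exp(−exp(−(t + c))), where c is the Euler–Mascheroni constant. Then μ has finite second moment and its variance equals π²/6, i.e. ∫ t² dμ(t) − (∫ t dμ(t))² = π²/6. -/

import Mathlib

set_option maxHeartbeats 1000000
open MeasureTheory Real Set Filter Topology

noncomputable def gumJ (k : ℕ) (s : ℝ) : ℝ :=
  ∫ t in Ioi (0:ℝ), exp (-t) * t ^ (s - 1) * Real.log t ^ k

lemma abs_log_le {t ε : ℝ} (ht : 0 < t) (hε : 0 < ε) :
    |Real.log t| ≤ (t ^ ε + t ^ (-ε)) / ε := by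
  have h1 : (0:ℝ) ≤ t ^ ε := (Real.rpow_pos_of_pos ht ε).le
  have h2 : (0:ℝ) ≤ t ^ (-ε) := (Real.rpow_pos_of_pos ht (-ε)).le
  rcases le_or_gt 1 t with h | h
  · rw [abs_of_nonneg (Real.log_nonneg h)]
    calc Real.log t ≤ t ^ ε / ε := Real.log_le_rpow_div ht.le hε
    _ ≤ (t ^ ε + t ^ (-ε)) / ε := by gcongr; linarith
  · rw [abs_of_nonpos (Real.log_nonpos ht.le h.le)]
    have := Real.log_le_rpow_div (x := t⁻¹) (by positivity) hε
    rw [Real.log_inv, Real.inv_rpow ht.le, ← Real.rpow_neg ht.le] at this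
    calc -Real.log t ≤ t ^ (-ε) / ε := this
    _ ≤ (t ^ ε + t ^ (-ε)) / ε := by gcongr; linarith

lemma gumJ_integrable {s : ℝ} (hs : 0 < s) {k : ℕ} (hk : k ≤ 2) :
    IntegrableOn (fun t => exp (-t) * t ^ (s - 1) * Real.log t ^ k) (Ioi (0:ℝ)) := by
  have h1 := Real.GammaIntegral_convergent hs
  have h2 := Real.GammaIntegral_convergent (s := 3*s/2) (by linarith)
  have h3 := Real.GammaIntegral_convergent (s := s/2) (by linarith)
  have hmeas : AEStronglyMeasurable (fun t => exp (-t) * t ^ (s - 1) * Real.log t ^ k)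
      (volume.restrict (Ioi (0:ℝ))) := by
    apply ContinuousOn.aestronglyMeasurable ?_ measurableSet_Ioi
    refine (((continuous_exp.comp continuous_neg).continuousOn.mul ?_).mul
      ((Real.continuousOn_log.mono ?_).pow k))
    · exact fun t ht => (Real.continuousAt_rpow_const t _ (Or.inl (ne_of_gt ht))).continuousWithinAt
    · exact fun t ht => ne_of_gt ht
  have hg : IntegrableOn (fun t => exp (-t) * t ^ (s-1) +
      (32/s^2) * (exp (-t) * t ^ (3*s/2-1) + exp (-t) * t ^ (s/2-1))) (Ioi (0:ℝ)) :=
    h1.add ((h2.add h3).const_mul _)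
  refine hg.mono' hmeas ?_
  rw [ae_restrict_iff' measurableSet_Ioi]
  filter_upwards with t ht
  have ht : (0:ℝ) < t := ht
  have hw : (0:ℝ) < t ^ (s-1) := Real.rpow_pos_of_pos ht _
  have hb : |Real.log t| ^ k ≤ 1 + Real.log t ^ 2 := by
    interval_cases k
    · simpa using sq_nonneg (Real.log t)
    · simp only [pow_one]
      nlinarith [sq_nonneg (|Real.log t| - 1), sq_abs (Real.log t)]
    · rw [← sq_abs (Real.log t)]; nlinarith [sq_nonneg (|Real.log t|)]
  have hlog := abs_log_le (ε := s/4) ht (by linarith)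
  have ha : (0:ℝ) < t ^ (s/4) := Real.rpow_pos_of_pos ht _
  have hainv : t ^ (-(s/4)) = (t ^ (s/4))⁻¹ := by
    rw [Real.rpow_neg ht.le]
  have hsq : Real.log t ^ 2 ≤ (32/s^2) * (t ^ (s/2) + t ^ (-(s/2))) := by
    have h2a : t ^ (s/2) = (t ^ (s/4))^2 := by
      rw [← Real.rpow_natCast (t ^ (s/4)) 2, ← Real.rpow_mul ht.le]; congr 1; ring
    have h2b : t ^ (-(s/2)) = ((t ^ (s/4))⁻¹)^2 := by
      rw [← hainv, ← Real.rpow_natCast (t ^ (-(s/4))) 2, ← Real.rpow_mul ht.le]; congr 1; ring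
    have hmul : t ^ (s/4) * (t ^ (s/4))⁻¹ = 1 := mul_inv_cancel₀ (ne_of_gt ha)
    have hsq0 : Real.log t ^ 2 ≤ ((t ^ (s/4) + t ^ (-(s/4))) / (s/4))^2 := by
      rw [← sq_abs (Real.log t)]
      apply pow_le_pow_left₀ (abs_nonneg _) hlog
    rw [h2a, h2b]
    set a := t ^ (s/4)
    rw [hainv] at hsq0
    calc Real.log t ^ 2 ≤ ((a + a⁻¹)/(s/4))^2 := hsq0
    _ = (16/s^2) * (a^2 + (a⁻¹)^2 + 2*(a*a⁻¹)) := by field_simp; ring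
    _ = (16/s^2) * (a^2 + (a⁻¹)^2 + 2) := by rw [hmul, mul_one]
    _ ≤ (32/s^2) * (a^2 + (a⁻¹)^2) := by
        have : 2 ≤ a^2 + (a⁻¹)^2 := by nlinarith [sq_nonneg (a - a⁻¹)]
        have h16 : (0:ℝ) < 16/s^2 := by positivity
        have h32 : (32:ℝ)/s^2 = 2*(16/s^2) := by ring
        nlinarith [mul_le_mul_of_nonneg_left this h16.le]
  have key : exp (-t) * t ^ (s-1) * |Real.log t| ^ k ≤
      exp (-t) * t ^ (s-1) + (32/s^2) * (exp (-t) * t ^ (3*s/2-1) + exp (-t) * t ^ (s/2-1)) := by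
    have e1 : t ^ (s-1) * t ^ (s/2) = t ^ (3*s/2-1) := by
      rw [← Real.rpow_add ht]; ring_nf
    have e2 : t ^ (s-1) * t ^ (-(s/2)) = t ^ (s/2-1) := by
      rw [← Real.rpow_add ht]; ring_nf
    calc exp (-t) * t ^ (s-1) * |Real.log t| ^ k
        ≤ exp (-t) * t ^ (s-1) * (1 + (32/s^2) * (t ^ (s/2) + t ^ (-(s/2)))) := by
          have := hb.trans (by linarith : 1 + Real.log t ^ 2 ≤ 1 + (32/s^2) * (t ^ (s/2) + t ^ (-(s/2))))
          exact mul_le_mul_of_nonneg_left this (by positivity)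
    _ = exp (-t) * t ^ (s-1) + (32/s^2) * (exp (-t) * (t ^ (s-1) * t ^ (s/2)) + exp (-t) * (t ^ (s-1) * t ^ (-(s/2)))) := by ring
    _ = _ := by rw [e1, e2]
  calc ‖exp (-t) * t ^ (s - 1) * Real.log t ^ k‖
      = exp (-t) * t ^ (s-1) * |Real.log t| ^ k := by
        rw [norm_eq_abs, abs_mul, abs_mul, abs_pow, abs_of_pos (exp_pos _), abs_of_pos hw]
  _ ≤ _ := key

lemma gumJ_zero_eq_Gamma {s : ℝ} (hs : 0 < s) : gumJ 0 s = Real.Gamma s := by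
  rw [Real.Gamma_eq_integral hs]; unfold gumJ; simp

lemma gumJ_rec {s : ℝ} (hs : 0 < s) {j : ℕ} (hj1 : 1 ≤ j) (hj : j ≤ 2) :
    gumJ j (s+1) = s * gumJ j s + j * gumJ (j-1) s := by
  have I0 := gumJ_integrable hs (k := j-1) (by omega)
  have I1 := gumJ_integrable hs (k := j) hj
  have I2 := gumJ_integrable (by linarith : (0:ℝ) < s+1) (k := j) hj
  set F := fun t : ℝ => t ^ s * Real.log t ^ j * exp (-t) with hF
  set G := fun t : ℝ => s * (exp (-t) * t ^ (s-1) * Real.log t ^ j)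
      + (j:ℝ) * (exp (-t) * t ^ (s-1) * Real.log t ^ (j-1))
      - exp (-t) * t ^ (s+1-1) * Real.log t ^ j with hG
  have hGint : IntegrableOn G (Ioi (0:ℝ)) := ((I1.const_mul s).add (I0.const_mul (j:ℝ))).sub I2
  have hjR : (0:ℝ) < (j:ℝ) := by exact_mod_cast hj1
  have hderiv : ∀ t ∈ Ioi (0:ℝ), HasDerivAt F (G t) t := by
    intro t ht
    have ht : (0:ℝ) < t := ht
    have h1 : HasDerivAt (fun t : ℝ => t ^ s) (s * t ^ (s-1)) t :=
      Real.hasDerivAt_rpow_const (Or.inl ht.ne')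
    have h2 : HasDerivAt (fun t : ℝ => Real.log t ^ j) ((j:ℝ) * Real.log t ^ (j-1) * t⁻¹) t :=
      (Real.hasDerivAt_log ht.ne').pow j
    have h3 : HasDerivAt (fun t : ℝ => exp (-t)) (-exp (-t)) t := by
      simpa using ((hasDerivAt_neg t).exp)
    have hmul := (h1.mul h2).mul h3
    have e1 : t ^ s * t⁻¹ = t ^ (s-1) := by
      rw [← Real.rpow_neg_one t, ← Real.rpow_add ht, show s + -1 = s - 1 by ring]
    have e2 : t ^ (s+1-1) = t ^ s := by norm_num
    have hthis : t ^ s * ((j:ℝ) * Real.log t ^ (j-1) * t⁻¹) = (j:ℝ) * (t ^ (s-1) * Real.log t ^ (j-1)) := by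
      rw [← e1]; ring
    have hval : G t = (s * t ^ (s-1) * Real.log t ^ j + t ^ s * ((j:ℝ) * Real.log t ^ (j-1) * t⁻¹))
        * exp (-t) + t ^ s * Real.log t ^ j * -exp (-t) := by
      rw [hG]; simp only []; rw [e2, hthis]; try ring
    rw [hval]; exact hmul
  have hF0 : F 0 = 0 := by
    simp [hF, Real.zero_rpow hs.ne']
  have hcont : ContinuousWithinAt F (Ici (0:ℝ)) 0 := by
    rw [ContinuousWithinAt, hF0]
    rw [show Ici (0:ℝ) = insert 0 (Ioi 0) from Set.Ioi_insert.symm, nhdsWithin_insert,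
      tendsto_sup]
    constructor
    · simpa [hF0] using tendsto_pure_nhds F 0
    · have key : Tendsto (fun t : ℝ => Real.log t * t ^ (s/(j:ℝ))) (𝓝[>] (0:ℝ)) (𝓝 0) :=
        tendsto_log_mul_rpow_nhdsGT_zero (by positivity)
      have key2 : Tendsto (fun t : ℝ => (Real.log t * t ^ (s/(j:ℝ))) ^ j * exp (-t))
          (𝓝[>] (0:ℝ)) (𝓝 0) := by
        have he : Tendsto (fun t : ℝ => exp (-t)) (𝓝[>] (0:ℝ)) (𝓝 1) := by
          have := ((continuous_exp.comp continuous_neg).tendsto 0).mono_left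
            (nhdsWithin_le_nhds (s := Ioi (0:ℝ)))
          simpa [Function.comp_def] using this
        have := (key.pow j).mul he
        simpa [zero_pow (by omega : j ≠ 0)] using this
      apply key2.congr'
      filter_upwards [self_mem_nhdsWithin] with t (ht : (0:ℝ) < t)
      rw [mul_pow, ← Real.rpow_natCast (t ^ (s/(j:ℝ))) j, ← Real.rpow_mul ht.le,
        div_mul_cancel₀ _ (ne_of_gt hjR)]
      rw [hF]
      ring
  have htop : Tendsto F atTop (𝓝 0) := by
    have hb : Tendsto (fun t : ℝ => t ^ (s + (j:ℝ)) * exp (-(1:ℝ) * t)) atTop (𝓝 0) :=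
      tendsto_rpow_mul_exp_neg_mul_atTop_nhds_zero _ 1 one_pos
    apply squeeze_zero_norm' ?_ (by simpa using hb)
    filter_upwards [eventually_ge_atTop (1:ℝ)] with t ht
    have ht0 : (0:ℝ) < t := by linarith
    have hlt : |Real.log t| ≤ t := by
      rw [abs_of_nonneg (Real.log_nonneg ht)]
      linarith [Real.log_le_sub_one_of_pos ht0]
    have : |Real.log t| ^ j ≤ t ^ (j:ℝ) := by
      rw [Real.rpow_natCast t j]
      exact pow_le_pow_left₀ (abs_nonneg _) hlt j
    calc ‖F t‖ = t ^ s * |Real.log t| ^ j * exp (-t) := by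
          rw [hF]; simp only []
          rw [norm_eq_abs, abs_mul, abs_mul, abs_pow, abs_of_pos (Real.rpow_pos_of_pos ht0 s),
            abs_of_pos (exp_pos _)]
    _ ≤ t ^ s * t ^ (j:ℝ) * exp (-t) := by
          have := mul_le_mul_of_nonneg_left this (Real.rpow_pos_of_pos ht0 s).le
          exact mul_le_mul_of_nonneg_right this (exp_pos _).le
    _ = t ^ (s + (j:ℝ)) * exp (-t) := by rw [← Real.rpow_add ht0]
  have hFTC := integral_Ioi_of_hasDerivAt_of_tendsto hcont hderiv hGint htop
  rw [hF0, sub_zero] at hFTC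
  have hIa : Integrable (fun t : ℝ => s * (exp (-t) * t ^ (s-1) * Real.log t ^ j)
      + (j:ℝ) * (exp (-t) * t ^ (s-1) * Real.log t ^ (j-1))) (volume.restrict (Ioi 0)) :=
    (I1.const_mul s).add (I0.const_mul (j:ℝ))
  have h5 : ∫ t in Ioi (0:ℝ), G t = (∫ t in Ioi (0:ℝ), (s * (exp (-t) * t ^ (s-1) * Real.log t ^ j)
      + (j:ℝ) * (exp (-t) * t ^ (s-1) * Real.log t ^ (j-1))))
      - ∫ t in Ioi (0:ℝ), exp (-t) * t ^ (s+1-1) * Real.log t ^ j := integral_sub hIa I2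
  have h6 : (∫ t in Ioi (0:ℝ), (s * (exp (-t) * t ^ (s-1) * Real.log t ^ j)
      + (j:ℝ) * (exp (-t) * t ^ (s-1) * Real.log t ^ (j-1))))
      = (∫ t in Ioi (0:ℝ), s * (exp (-t) * t ^ (s-1) * Real.log t ^ j))
      + ∫ t in Ioi (0:ℝ), (j:ℝ) * (exp (-t) * t ^ (s-1) * Real.log t ^ (j-1)) :=
    integral_add (I1.const_mul s) (I0.const_mul (j:ℝ))
  rw [h5, h6, integral_const_mul, integral_const_mul] at hFTC
  have h7 : gumJ j (s+1) = ∫ t in Ioi (0:ℝ), exp (-t) * t ^ (s+1-1) * Real.log t ^ j := rfl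
  have h8 : gumJ j s = ∫ t in Ioi (0:ℝ), exp (-t) * t ^ (s-1) * Real.log t ^ j := rfl
  have h9 : gumJ (j-1) s = ∫ t in Ioi (0:ℝ), exp (-t) * t ^ (s-1) * Real.log t ^ (j-1) := rfl
  rw [← h7, ← h8, ← h9] at hFTC
  linarith [hFTC]

lemma gumJ_zero_pos {s : ℝ} (hs : 0 < s) : 0 < gumJ 0 s := by
  rw [gumJ_zero_eq_Gamma hs]; exact Real.Gamma_pos_of_pos hs

lemma gum_quad_eq {s : ℝ} (hs : 0 < s) (c : ℝ) :
    ∫ t in Ioi (0:ℝ), exp (-t) * t ^ (s-1) * (Real.log t - c)^2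
      = gumJ 2 s - 2*c*gumJ 1 s + c^2 * gumJ 0 s := by
  have I0 := gumJ_integrable hs (k := 0) (by norm_num)
  have I1 := gumJ_integrable hs (k := 1) (by norm_num)
  have I2 := gumJ_integrable hs (k := 2) (by norm_num)
  have hfe : (fun t : ℝ => exp (-t) * t ^ (s-1) * (Real.log t - c)^2)
      = fun t : ℝ => (exp (-t) * t ^ (s-1) * Real.log t ^ 2
        - (2*c) * (exp (-t) * t ^ (s-1) * Real.log t ^ 1))
        + c^2 * (exp (-t) * t ^ (s-1) * Real.log t ^ 0) := by
    funext t; simp only [pow_one, pow_zero, mul_one]; ring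
  rw [hfe]
  have hsub : Integrable (fun t : ℝ => exp (-t) * t ^ (s-1) * Real.log t ^ 2
      - (2*c) * (exp (-t) * t ^ (s-1) * Real.log t ^ 1)) (volume.restrict (Ioi 0)) :=
    I2.sub (I1.const_mul (2*c))
  rw [integral_add hsub (I0.const_mul (c^2)),
    integral_sub I2 (I1.const_mul (2*c)), integral_const_mul, integral_const_mul]
  have h2 : gumJ 2 s = ∫ t in Ioi (0:ℝ), exp (-t) * t ^ (s-1) * Real.log t ^ 2 := rfl
  have h1 : gumJ 1 s = ∫ t in Ioi (0:ℝ), exp (-t) * t ^ (s-1) * Real.log t ^ 1 := rfl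
  have h0 : gumJ 0 s = ∫ t in Ioi (0:ℝ), exp (-t) * t ^ (s-1) * Real.log t ^ 0 := rfl
  rw [← h2, ← h1, ← h0]

lemma gum_quad_nonneg {s : ℝ} (hs : 0 < s) (c : ℝ) :
    0 ≤ gumJ 2 s - 2*c*gumJ 1 s + c^2 * gumJ 0 s := by
  rw [← gum_quad_eq hs c]
  apply setIntegral_nonneg measurableSet_Ioi
  intro t ht
  have h1 : (0:ℝ) ≤ exp (-t) * t ^ (s-1) :=
    mul_nonneg (exp_pos _).le (Real.rpow_nonneg (le_of_lt ht) _)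
  exact mul_nonneg h1 (sq_nonneg _)

noncomputable def gumV (s : ℝ) : ℝ := gumJ 2 s / gumJ 0 s - (gumJ 1 s / gumJ 0 s) ^ 2

lemma gumV_nonneg {s : ℝ} (hs : 0 < s) : 0 ≤ gumV s := by
  have hA := gumJ_zero_pos hs
  have h := gum_quad_nonneg hs (gumJ 1 s / gumJ 0 s)
  have key : gumJ 2 s / gumJ 0 s - (gumJ 1 s / gumJ 0 s)^2
      = (gumJ 2 s - 2*(gumJ 1 s / gumJ 0 s)*gumJ 1 s + (gumJ 1 s / gumJ 0 s)^2*gumJ 0 s)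
        / gumJ 0 s := by
    field_simp
    ring
  unfold gumV
  rw [key]
  exact div_nonneg h hA.le

lemma gumV_rec {s : ℝ} (hs : 0 < s) : gumV (s+1) = gumV s - 1/s^2 := by
  have hA := gumJ_zero_pos hs
  have hA0 : gumJ 0 (s+1) = s * gumJ 0 s := by
    rw [gumJ_zero_eq_Gamma (by linarith : (0:ℝ) < s+1), gumJ_zero_eq_Gamma hs,
      Real.Gamma_add_one hs.ne']
  have hB := gumJ_rec hs (j := 1) le_rfl (by norm_num)
  have hC := gumJ_rec hs (j := 2) (by norm_num) le_rfl
  norm_num at hB hC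
  unfold gumV
  rw [hA0, hB, hC]
  field_simp
  ring

lemma log_sq_le {u : ℝ} (hu : 0 < u) : Real.log u ^ 2 ≤ (u - 1)^2 + (u⁻¹ - 1)^2 := by
  rcases le_or_gt 1 u with h | h
  · have h1 : Real.log u ≤ u - 1 := by linarith [Real.log_le_sub_one_of_pos hu]
    have h0 : 0 ≤ Real.log u := Real.log_nonneg h
    nlinarith [sq_nonneg (u⁻¹ - 1)]
  · have h1 : Real.log u⁻¹ ≤ u⁻¹ - 1 := by
      linarith [Real.log_le_sub_one_of_pos (inv_pos.mpr hu)]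
    have h0 : 0 ≤ Real.log u⁻¹ := Real.log_nonneg (one_le_inv_iff₀.mpr ⟨hu, h.le⟩)
    rw [Real.log_inv] at h1 h0
    nlinarith [sq_nonneg (u - 1)]

lemma gumV_le {s : ℝ} (hs2 : 2 < s) : gumV s ≤ 1/s + (s+2)/((s-1)*(s-2)) := by
  have hs : (0:ℝ) < s := by linarith
  have hs1 : (0:ℝ) < s - 1 := by linarith
  have hs2' : (0:ℝ) < s - 2 := by linarith
  have hA := gumJ_zero_pos hs
  set c := Real.log s with hc
  set W := fun t : ℝ => (1/s^2) * (exp (-t) * t ^ (s+2-1)) + (-(2/s)) * (exp (-t) * t ^ (s+1-1))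
      + (2:ℝ) * (exp (-t) * t ^ (s-1)) + s^2 * (exp (-t) * t ^ (s-2-1))
      + (-(2*s)) * (exp (-t) * t ^ (s-1-1)) with hW
  have Ip2 := Real.GammaIntegral_convergent (s := s+2) (by linarith)
  have Ip1 := Real.GammaIntegral_convergent (s := s+1) (by linarith)
  have Ip0 := Real.GammaIntegral_convergent (s := s) hs
  have Im1 := Real.GammaIntegral_convergent (s := s-1) hs1
  have Im2 := Real.GammaIntegral_convergent (s := s-2) hs2'
  have J1 : Integrable (fun t : ℝ => (1/s^2) * (exp (-t) * t ^ (s+2-1)))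
      (volume.restrict (Ioi 0)) := Ip2.const_mul _
  have J2 : Integrable (fun t : ℝ => (-(2/s)) * (exp (-t) * t ^ (s+1-1)))
      (volume.restrict (Ioi 0)) := Ip1.const_mul _
  have J3 : Integrable (fun t : ℝ => (2:ℝ) * (exp (-t) * t ^ (s-1)))
      (volume.restrict (Ioi 0)) := Ip0.const_mul _
  have J4 : Integrable (fun t : ℝ => s^2 * (exp (-t) * t ^ (s-2-1)))
      (volume.restrict (Ioi 0)) := Im2.const_mul _
  have J5 : Integrable (fun t : ℝ => (-(2*s)) * (exp (-t) * t ^ (s-1-1)))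
      (volume.restrict (Ioi 0)) := Im1.const_mul _
  have K12 : Integrable (fun t : ℝ => (1/s^2) * (exp (-t) * t ^ (s+2-1))
      + (-(2/s)) * (exp (-t) * t ^ (s+1-1))) (volume.restrict (Ioi 0)) := J1.add J2
  have K123 : Integrable (fun t : ℝ => (1/s^2) * (exp (-t) * t ^ (s+2-1))
      + (-(2/s)) * (exp (-t) * t ^ (s+1-1)) + (2:ℝ) * (exp (-t) * t ^ (s-1)))
      (volume.restrict (Ioi 0)) := K12.add J3
  have K1234 : Integrable (fun t : ℝ => (1/s^2) * (exp (-t) * t ^ (s+2-1))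
      + (-(2/s)) * (exp (-t) * t ^ (s+1-1)) + (2:ℝ) * (exp (-t) * t ^ (s-1))
      + s^2 * (exp (-t) * t ^ (s-2-1))) (volume.restrict (Ioi 0)) := K123.add J4
  have hWint : IntegrableOn W (Ioi (0:ℝ)) := K1234.add J5
  have I0 := gumJ_integrable hs (k := 0) (by norm_num)
  have I1 := gumJ_integrable hs (k := 1) (by norm_num)
  have I2 := gumJ_integrable hs (k := 2) (by norm_num)
  have hi1 : IntegrableOn (fun t : ℝ => exp (-t) * t ^ (s-1) * (Real.log t - c)^2)
      (Ioi (0:ℝ)) := by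
    have hfe : (fun t : ℝ => exp (-t) * t ^ (s-1) * (Real.log t - c)^2)
        = fun t : ℝ => (exp (-t) * t ^ (s-1) * Real.log t ^ 2
          - (2*c) * (exp (-t) * t ^ (s-1) * Real.log t ^ 1))
          + c^2 * (exp (-t) * t ^ (s-1) * Real.log t ^ 0) := by
      funext t; simp only [pow_one, pow_zero, mul_one]; ring
    rw [hfe]
    exact (I2.sub (I1.const_mul _)).add (I0.const_mul _)
  have hmono : ∫ t in Ioi (0:ℝ), exp (-t) * t ^ (s-1) * (Real.log t - c)^2
      ≤ ∫ t in Ioi (0:ℝ), W t := by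
    apply setIntegral_mono_on hi1 hWint measurableSet_Ioi
    intro t ht
    have ht : (0:ℝ) < t := ht
    have hts : (0:ℝ) < t/s := by positivity
    have hlog : (Real.log t - c)^2 ≤ (t/s - 1)^2 + (s/t - 1)^2 := by
      have h := log_sq_le hts
      rw [Real.log_div ht.ne' hs.ne', inv_div] at h
      exact h
    have hW1 : W t = exp (-t) * t ^ (s-1) * ((t/s - 1)^2 + (s/t - 1)^2) := by
      rw [hW]
      have e1 : t ^ (s+2-1) = t ^ (s-1) * t^(2:ℕ) := by
        rw [← Real.rpow_natCast t 2, ← Real.rpow_add ht]; congr 1; push_cast; ring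
      have e2 : t ^ (s+1-1) = t ^ (s-1) * t := by
        have h' : t ^ (s-1) * t ^ (1:ℝ) = t ^ (s+1-1) := by
          rw [← Real.rpow_add ht]; congr 1; ring
        rw [← h', Real.rpow_one]
      have e3 : t ^ (s-2-1) = t ^ (s-1) * (t^(2:ℕ))⁻¹ := by
        rw [← Real.rpow_natCast t 2, ← Real.rpow_neg ht.le, ← Real.rpow_add ht]
        congr 1; push_cast; ring
      have e4 : t ^ (s-1-1) = t ^ (s-1) * t⁻¹ := by
        rw [← Real.rpow_neg_one t, ← Real.rpow_add ht, show s - 1 + -1 = s-1-1 by ring]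
      simp only []
      rw [e1, e2, e3, e4]
      field_simp
      ring
    rw [hW1]
    exact mul_le_mul_of_nonneg_left hlog
      (mul_nonneg (exp_pos _).le (Real.rpow_nonneg ht.le _))
  have hWval : ∫ t in Ioi (0:ℝ), W t = (1/s^2) * Real.Gamma (s+2) + (-(2/s)) * Real.Gamma (s+1)
      + 2 * Real.Gamma s + s^2 * Real.Gamma (s-2) + (-(2*s)) * Real.Gamma (s-1) := by
    rw [hW]
    rw [integral_add K1234 J5, integral_add K123 J4, integral_add K12 J3, integral_add J1 J2,
      integral_const_mul, integral_const_mul, integral_const_mul, integral_const_mul,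
      integral_const_mul,
      ← Real.Gamma_eq_integral (by linarith : (0:ℝ) < s+2),
      ← Real.Gamma_eq_integral (by linarith : (0:ℝ) < s+1),
      ← Real.Gamma_eq_integral hs, ← Real.Gamma_eq_integral hs2',
      ← Real.Gamma_eq_integral hs1]
  have G1 : Real.Gamma (s+1) = s * Real.Gamma s := Real.Gamma_add_one hs.ne'
  have G2 : Real.Gamma (s+2) = (s+1) * Real.Gamma (s+1) := by
    have h := Real.Gamma_add_one (s := s+1) (by linarith)
    rw [show s+1+1 = s+2 by ring] at h; exact h
  have G3 : Real.Gamma s = (s-1) * Real.Gamma (s-1) := by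
    have h := Real.Gamma_add_one (s := s-1) hs1.ne'
    rw [show s-1+1 = s by ring] at h; exact h
  have G4 : Real.Gamma (s-1) = (s-2) * Real.Gamma (s-2) := by
    have h := Real.Gamma_add_one (s := s-2) hs2'.ne'
    rw [show s-2+1 = s-1 by ring] at h; exact h
  have g3 : Real.Gamma (s-1) = Real.Gamma s / (s-1) := by
    rw [G3]; field_simp
  have g4 : Real.Gamma (s-2) = Real.Gamma s / ((s-1)*(s-2)) := by
    have h := G4
    rw [g3] at h
    field_simp at h ⊢
    nlinarith [h]
  have hKA : ∫ t in Ioi (0:ℝ), W t = (1/s + (s+2)/((s-1)*(s-2))) * gumJ 0 s := by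
    rw [hWval, gumJ_zero_eq_Gamma hs, G2, G1, g3, g4]
    field_simp
    ring
  have hq := gum_quad_eq hs c
  have hle : gumJ 2 s - 2*c*gumJ 1 s + c^2*gumJ 0 s
      ≤ (1/s + (s+2)/((s-1)*(s-2))) * gumJ 0 s := by
    rw [← hq, ← hKA]; exact hmono
  have hVform : gumV s = (gumJ 2 s * gumJ 0 s - gumJ 1 s^2)/gumJ 0 s^2 := by
    unfold gumV; field_simp
  rw [hVform, div_le_iff₀ (by positivity)]
  nlinarith [sq_nonneg (gumJ 1 s - c*gumJ 0 s), mul_le_mul_of_nonneg_left hle hA.le, hA]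

lemma gumV_one : gumV 1 = π^2/6 := by
  have hrec : ∀ n : ℕ, gumV ((n:ℝ)+1) = gumV 1 - ∑ k ∈ Finset.range n, 1/((k:ℝ)+1)^2 := by
    intro n
    induction n with
    | zero => simp
    | succ n ih =>
      have h := gumV_rec (s := (n:ℝ)+1) (by positivity)
      have hcast : (((n+1:ℕ)):ℝ) + 1 = ((n:ℝ)+1) + 1 := by push_cast; ring
      rw [hcast, h, ih, Finset.sum_range_succ]
      ring
  have hub : ∀ n : ℕ, 2 ≤ n → gumV ((n:ℝ)+1) ≤ 7/(n:ℝ) := by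
    intro n hn
    have hx : (2:ℝ) ≤ (n:ℝ) := by exact_mod_cast hn
    have h := gumV_le (s := (n:ℝ)+1) (by linarith)
    have h1 : (0:ℝ) < (n:ℝ) := by linarith
    have h2 : (0:ℝ) < (n:ℝ) - 1 := by linarith
    have h3 : (0:ℝ) < (n:ℝ) + 1 := by linarith
    refine h.trans ?_
    rw [show ((n:ℝ)+1)-1 = (n:ℝ) by ring, show ((n:ℝ)+1)-2 = (n:ℝ)-1 by ring,
      show ((n:ℝ)+1)+2 = (n:ℝ)+3 by ring]
    rw [div_add_div _ _ (ne_of_gt h3) (ne_of_gt (mul_pos h1 h2)),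
      div_le_div_iff₀ (by positivity) h1]
    nlinarith [mul_nonneg (mul_nonneg h1.le h1.le) (by linarith : (0:ℝ) ≤ (n:ℝ)-2),
      mul_nonneg h1.le (by linarith : (0:ℝ) ≤ 7*(n:ℝ)-10)]
  have htend0 : Tendsto (fun n : ℕ => gumV ((n:ℝ)+1)) atTop (𝓝 0) := by
    apply tendsto_of_tendsto_of_tendsto_of_le_of_le' (g := fun _ : ℕ => (0:ℝ))
      (h := fun n : ℕ => 7/(n:ℝ)) tendsto_const_nhds
      (tendsto_const_div_atTop_nhds_zero_nat 7)
      (Filter.Eventually.of_forall fun n => gumV_nonneg (by positivity))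
      (by filter_upwards [eventually_ge_atTop 2] with n hn; exact hub n hn)
  have hsum : Tendsto (fun n : ℕ => ∑ k ∈ Finset.range n, 1/((k:ℝ)+1)^2) atTop
      (𝓝 (π^2/6)) := by
    have h := hasSum_zeta_two.tendsto_sum_nat
    have h2 := h.comp (tendsto_add_atTop_nat 1)
    apply h2.congr
    intro n
    simp only [Function.comp_apply]
    rw [Finset.sum_range_succ']
    push_cast
    norm_num
  have hfin : Tendsto (fun n : ℕ => gumV ((n:ℝ)+1)) atTop (𝓝 (gumV 1 - π^2/6)) := by
    apply (tendsto_const_nhds.sub hsum).congr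
    intro n
    exact (hrec n).symm
  have := tendsto_nhds_unique hfin htend0
  linarith

lemma gum_key : gumJ 2 1 - gumJ 1 1 ^ 2 = π^2/6 := by
  have h0 : gumJ 0 1 = 1 := by rw [gumJ_zero_eq_Gamma one_pos, Real.Gamma_one]
  have h := gumV_one
  unfold gumV at h
  rw [h0] at h
  simpa using h

section Gumbel

local notation "γ" => Real.eulerMascheroniConstant

noncomputable def gumPhi (t : ℝ) : ℝ := exp (-(t+γ)) * exp (-exp (-(t+γ)))

lemma gumPhi_nonneg (t : ℝ) : 0 ≤ gumPhi t :=
  mul_nonneg (exp_pos _).le (exp_pos _).le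

lemma gumPhi_cont : Continuous gumPhi := by
  have c1 : Continuous fun t : ℝ => -(t+γ) := (continuous_id.add continuous_const).neg
  have c2 : Continuous fun t : ℝ => exp (-(t+γ)) := continuous_exp.comp c1
  exact c2.mul (continuous_exp.comp c2.neg)

lemma gumF_hasDeriv (t : ℝ) :
    HasDerivAt (fun t : ℝ => exp (-exp (-(t+γ)))) (gumPhi t) t := by
  have h1 : HasDerivAt (fun t : ℝ => -(t+γ)) (-1) t := by
    exact ((hasDerivAt_id' t).add_const γ).neg
  have h2 : HasDerivAt (fun t : ℝ => exp (-(t+γ))) (exp (-(t+γ)) * (-1)) t := h1.exp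
  have h3 : HasDerivAt (fun t : ℝ => -exp (-(t+γ))) (exp (-(t+γ))) t := by
    have := h2.neg; simp only [mul_neg_one, neg_neg] at this; exact this
  have h4 := h3.exp
  simpa [gumPhi, mul_comm] using h4

lemma gumPhi_le (t : ℝ) : gumPhi t ≤ 4 * exp (t+γ) := by
  set y := exp (-(t+γ)) with hy
  have hy0 : (0:ℝ) < y := exp_pos _
  have hsq : exp y = exp (y/2) * exp (y/2) := by
    rw [← Real.exp_add]; congr 1; ring
  have he : y^2/4 ≤ exp y := by
    nlinarith [Real.add_one_le_exp (y/2), hy0.le, Real.exp_pos (y/2)]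
  have h5 : (exp y)⁻¹ ≤ (y^2/4)⁻¹ := inv_anti₀ (by positivity) he
  have h6 : gumPhi t = y * (exp y)⁻¹ := by rw [← Real.exp_neg]; rfl
  calc gumPhi t = y * (exp y)⁻¹ := h6
  _ ≤ y * (y^2/4)⁻¹ := mul_le_mul_of_nonneg_left h5 hy0.le
  _ = 4 * y⁻¹ := by field_simp
  _ = 4 * exp (t+γ) := by rw [hy, Real.exp_neg, inv_inv]

lemma gumPhi_integrableOn_Iic (a : ℝ) : IntegrableOn gumPhi (Iic a) := by
  have hbig : IntegrableOn (fun t : ℝ => (4 * exp γ) * exp t) (Iic a) :=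
    (integrableOn_exp_Iic a).const_mul _
  refine hbig.mono' (gumPhi_cont.aestronglyMeasurable.restrict) ?_
  filter_upwards with t
  rw [Real.norm_eq_abs, abs_of_nonneg (gumPhi_nonneg t)]
  calc gumPhi t ≤ 4 * exp (t+γ) := gumPhi_le t
  _ = 4 * exp γ * exp t := by rw [Real.exp_add]; ring

lemma gumF_tendsto_atBot :
    Tendsto (fun t : ℝ => exp (-exp (-(t+γ)))) atBot (𝓝 0) := by
  have h1 : Tendsto (fun t : ℝ => t + γ) atBot atBot := tendsto_atBot_add_const_right _ _ tendsto_id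
  have h2 : Tendsto (fun t : ℝ => -(t+γ)) atBot atTop := tendsto_neg_atBot_atTop.comp h1
  have h3 : Tendsto (fun t : ℝ => exp (-(t+γ))) atBot atTop := Real.tendsto_exp_atTop.comp h2
  have h4 : Tendsto (fun t : ℝ => -exp (-(t+γ))) atBot atBot := tendsto_neg_atTop_atBot.comp h3
  exact Real.tendsto_exp_atBot.comp h4

lemma gumPhi_integral_Iic (a : ℝ) : ∫ t in Iic a, gumPhi t = exp (-exp (-(a+γ))) := by
  have h := integral_Iic_of_hasDerivAt_of_tendsto (f := fun t : ℝ => exp (-exp (-(t+γ))))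
    (f' := gumPhi) (a := a) (m := 0)
    (gumF_hasDeriv a).continuousAt.continuousWithinAt
    (fun x _ => gumF_hasDeriv x) (gumPhi_integrableOn_Iic a) gumF_tendsto_atBot
  rw [h, sub_zero]

lemma gum_baseI {k : ℕ} (hk : k ≤ 2) :
    IntegrableOn (fun u : ℝ => exp (-u) * Real.log u ^ k) (Ioi (0:ℝ)) := by
  have h := gumJ_integrable one_pos hk
  simpa using h

lemma gumJ_one_eq (k : ℕ) : gumJ k 1 = ∫ u in Ioi (0:ℝ), exp (-u) * Real.log u ^ k := by
  unfold gumJ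
  simp

lemma gum_fn1_eq : (fun u : ℝ => (-Real.log u - γ)^1 * exp (-u))
    = fun u : ℝ => (-1 : ℝ) * (exp (-u) * Real.log u ^ 1)
      + (-γ) * (exp (-u) * Real.log u ^ 0) := by
  funext u; simp only [pow_one, pow_zero, mul_one]; ring

lemma gum_fn2_eq : (fun u : ℝ => (-Real.log u - γ)^2 * exp (-u))
    = fun u : ℝ => (exp (-u) * Real.log u ^ 2 + (2*γ) * (exp (-u) * Real.log u ^ 1))
      + γ^2 * (exp (-u) * Real.log u ^ 0) := by
  funext u; simp only [pow_one, pow_zero, mul_one]; ring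

lemma gum_fn1_int : IntegrableOn (fun u : ℝ => (-Real.log u - γ)^1 * exp (-u)) (Ioi (0:ℝ)) := by
  rw [gum_fn1_eq]
  exact ((gum_baseI (by norm_num)).const_mul _).add ((gum_baseI (by norm_num)).const_mul _)

lemma gum_fn2_int : IntegrableOn (fun u : ℝ => (-Real.log u - γ)^2 * exp (-u)) (Ioi (0:ℝ)) := by
  rw [gum_fn2_eq]
  have h12 : Integrable (fun u : ℝ => exp (-u) * Real.log u ^ 2
      + (2*γ) * (exp (-u) * Real.log u ^ 1)) (volume.restrict (Ioi 0)) :=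
    (gum_baseI (by norm_num)).add ((gum_baseI (by norm_num)).const_mul _)
  exact h12.add ((gum_baseI (by norm_num)).const_mul _)

lemma gum_fn1_val : ∫ u in Ioi (0:ℝ), (-Real.log u - γ)^1 * exp (-u) = -gumJ 1 1 - γ := by
  rw [gum_fn1_eq]
  rw [integral_add ((gum_baseI (by norm_num)).const_mul _) ((gum_baseI (by norm_num)).const_mul _),
    integral_const_mul, integral_const_mul, ← gumJ_one_eq, ← gumJ_one_eq]
  have h0 : gumJ 0 1 = 1 := by rw [gumJ_zero_eq_Gamma one_pos, Real.Gamma_one]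
  rw [h0]; ring

lemma gum_fn2_val : ∫ u in Ioi (0:ℝ), (-Real.log u - γ)^2 * exp (-u)
    = gumJ 2 1 + 2*γ*gumJ 1 1 + γ^2 := by
  rw [gum_fn2_eq]
  have h12 : Integrable (fun u : ℝ => exp (-u) * Real.log u ^ 2
      + (2*γ) * (exp (-u) * Real.log u ^ 1)) (volume.restrict (Ioi 0)) :=
    (gum_baseI (by norm_num)).add ((gum_baseI (by norm_num)).const_mul _)
  rw [integral_add h12 ((gum_baseI (by norm_num)).const_mul _),
    integral_add (gum_baseI (by norm_num)) ((gum_baseI (by norm_num)).const_mul _),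
    integral_const_mul, integral_const_mul, ← gumJ_one_eq, ← gumJ_one_eq, ← gumJ_one_eq]
  have h0 : gumJ 0 1 = 1 := by rw [gumJ_zero_eq_Gamma one_pos, Real.Gamma_one]
  rw [h0]; ring

lemma gum_g_deriv : ∀ t ∈ (univ : Set ℝ),
    HasDerivWithinAt (fun t : ℝ => exp (-(t+γ))) (-exp (-(t+γ))) univ t := by
  intro t _
  have h1 : HasDerivAt (fun t : ℝ => -(t+γ)) (-1) t := by
    exact ((hasDerivAt_id' t).add_const γ).neg
  have h2 := h1.exp
  rw [hasDerivWithinAt_univ]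
  simpa using h2

lemma gum_g_inj : InjOn (fun t : ℝ => exp (-(t+γ))) univ := by
  intro a _ b _ hab
  have := Real.exp_injective hab
  linarith [this]

lemma gum_g_img : (fun t : ℝ => exp (-(t+γ))) '' univ = Ioi (0:ℝ) := by
  ext u
  simp only [image_univ, mem_range, mem_Ioi]
  constructor
  · rintro ⟨t, rfl⟩; exact exp_pos _
  · intro hu
    exact ⟨-Real.log u - γ, by
      rw [show -(-Real.log u - γ + γ) = Real.log u by ring, Real.exp_log hu]⟩

lemma gum_CoV (fn : ℝ → ℝ) :
    ∫ u in Ioi (0:ℝ), fn u = ∫ t : ℝ, exp (-(t+γ)) * fn (exp (-(t+γ))) := by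
  have h := integral_image_eq_integral_abs_deriv_smul MeasurableSet.univ gum_g_deriv gum_g_inj fn
  rw [gum_g_img, Measure.restrict_univ] at h
  rw [h]
  congr 1; funext t
  rw [smul_eq_mul, abs_neg, abs_of_pos (exp_pos _)]

lemma gum_CoV_integrable (fn : ℝ → ℝ)
    (h : IntegrableOn fn (Ioi (0:ℝ))) :
    Integrable (fun t : ℝ => exp (-(t+γ)) * fn (exp (-(t+γ)))) := by
  have hiff := integrableOn_image_iff_integrableOn_abs_deriv_smul MeasurableSet.univ
    gum_g_deriv gum_g_inj fn
  rw [gum_g_img] at hiff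
  have h2 := hiff.mp h
  rw [integrableOn_univ] at h2
  have : (fun x : ℝ => |-exp (-(x+γ))| • fn (exp (-(x+γ))))
      = fun t : ℝ => exp (-(t+γ)) * fn (exp (-(t+γ))) := by
    funext t; rw [smul_eq_mul, abs_neg, abs_of_pos (exp_pos _)]
  rwa [this] at h2

lemma gum_moment_ptwise (k : ℕ) (t : ℝ) :
    exp (-(t+γ)) * ((-Real.log (exp (-(t+γ))) - γ)^k * exp (-(exp (-(t+γ)))))
      = gumPhi t * t^k := by
  rw [Real.log_exp, show -(-(t+γ)) - γ = t by ring]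
  simp only [gumPhi]; ring

lemma gum_moment (k : ℕ) :
    (∫ u in Ioi (0:ℝ), (-Real.log u - γ)^k * exp (-u)) = ∫ t : ℝ, gumPhi t * t^k := by
  rw [gum_CoV]
  congr 1; funext t
  exact gum_moment_ptwise k t

lemma gum_moment_integrable (k : ℕ)
    (h : IntegrableOn (fun u : ℝ => (-Real.log u - γ)^k * exp (-u)) (Ioi (0:ℝ))) :
    Integrable (fun t : ℝ => gumPhi t * t^k) := by
  have h2 := gum_CoV_integrable _ h
  apply h2.congr
  filter_upwards with t
  exact gum_moment_ptwise k t

end Gumbel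

section Final

local notation "γ" => Real.eulerMascheroniConstant

/-- If `μ` is the probability measure on `ℝ` whose cumulative distribution
function is `F t = exp (-exp (-(t + c)))`, with `c` the Euler–Mascheroni constant (i.e. the
zero-mean Gumbel distribution), then `μ` has finite second moment and its variance is `π²/6`. -/
theorem gumbel_variance_pi_sq_div_six (μ : Measure ℝ) [IsProbabilityMeasure μ]
    (hcdf : ∀ t : ℝ,
      μ (Set.Iic t) = ENNReal.ofReal (exp (-exp (-(t + eulerMascheroniConstant))))) :
    Integrable (fun t : ℝ => t ^ 2) μ ∧
      (∫ t : ℝ, t ^ 2 ∂μ) - (∫ t : ℝ, t ∂μ) ^ 2 = π ^ 2 / 6 := by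
  classical
  set dnn : ℝ → NNReal := fun t => (gumPhi t).toNNReal with hdnn
  have hdnn_meas : Measurable dnn := gumPhi_cont.measurable.real_toNNReal
  set ν : Measure ℝ := volume.withDensity (fun t => (dnn t : ENNReal)) with hν
  have hν_Iic : ∀ a : ℝ, ν (Set.Iic a) = ENNReal.ofReal (exp (-exp (-(a + γ)))) := by
    intro a
    rw [hν, withDensity_apply _ measurableSet_Iic]
    calc ∫⁻ t in Set.Iic a, (dnn t : ENNReal)
        = ∫⁻ t in Set.Iic a, ENNReal.ofReal (gumPhi t) := rfl
    _ = ENNReal.ofReal (∫ t in Set.Iic a, gumPhi t) :=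
        (ofReal_integral_eq_lintegral_ofReal (gumPhi_integrableOn_Iic a)
          (ae_of_all _ gumPhi_nonneg)).symm
    _ = _ := by rw [gumPhi_integral_Iic a]
  have hμν : μ = ν := by
    apply Measure.ext_of_Iic μ ν
    intro a
    rw [hcdf a, hν_Iic a]
  have hint1 : Integrable (fun t : ℝ => gumPhi t * t^1) := gum_moment_integrable 1 gum_fn1_int
  have hint2 : Integrable (fun t : ℝ => gumPhi t * t^2) := gum_moment_integrable 2 gum_fn2_int
  have hIμ : ∀ k : ℕ, Integrable (fun t : ℝ => gumPhi t * t^k) →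
      Integrable (fun t : ℝ => t^k) μ := by
    intro k h
    rw [hμν, hν]
    rw [integrable_withDensity_iff hdnn_meas.coe_nnreal_ennreal
      (ae_of_all _ fun t => ENNReal.coe_lt_top)]
    apply h.congr
    filter_upwards with t
    rw [ENNReal.coe_toReal, hdnn]
    simp only []
    rw [Real.coe_toNNReal _ (gumPhi_nonneg t), mul_comm]
  have hval : ∀ k : ℕ, (∫ t : ℝ, t^k ∂μ) = ∫ t : ℝ, gumPhi t * t^k := by
    intro k
    rw [hμν, hν, integral_withDensity_eq_integral_smul hdnn_meas]
    congr 1; funext t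
    rw [NNReal.smul_def, smul_eq_mul, hdnn]
    simp only []
    rw [Real.coe_toNNReal _ (gumPhi_nonneg t)]
  refine ⟨hIμ 2 hint2, ?_⟩
  have h2 : (∫ t : ℝ, t^2 ∂μ) = gumJ 2 1 + 2*γ*gumJ 1 1 + γ^2 := by
    rw [hval 2, ← gum_moment 2, gum_fn2_val]
  have h1 : (∫ t : ℝ, t ∂μ) = -gumJ 1 1 - γ := by
    have hv := hval 1
    rw [← gum_moment 1, gum_fn1_val] at hv
    simpa using hv
  rw [h2, h1]
  have hk := gum_key
  ring_nf
  ring_nf at hk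
  linarith

end Final
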